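/- Let X be a Banach space, F a finite-dimensional subspace of X, and ε > 0. Then there exists a closed subspace M ⊆ X of finite codimension such that ‖f + m‖ ≥ (1 − ε)·max{‖f‖, ‖m‖/2} for all f ∈ F and m ∈ M. -/

import Mathlib

/-- For a finite-dimensional subspace `F` of a Banach space `X` and `ε > 0`, there is a
closed finite-codimensional subspace `M` with `‖f + m‖ ≥ (1 - ε) max{‖f‖, ‖m‖/2}`. -/
theorem stmt_0 (X : Type*) [NormedAddCommGroup X] [NormedSpace ℂ X] [CompleteSpace X]
    (F : Submodule ℂ X) (hF : FiniteDimensional ℂ F) (ε : ℝ) (hε : 0 < ε) :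
    ∃ M : Submodule ℂ X, IsClosed (M : Set X) ∧ FiniteDimensional ℂ (X ⧸ M) ∧
      ∀ f ∈ F, ∀ m ∈ M, ‖f + m‖ ≥ (1 - ε) * max ‖f‖ (‖m‖ / 2) := by
  rcases le_or_gt 1 ε with hε1 | hε1
  · refine ⟨⊤, by simp, inferInstance, ?_⟩
    intro f hf m hm
    have h1 : (1 - ε) ≤ 0 := by linarith
    have h2 : (1 - ε) * max ‖f‖ (‖m‖ / 2) ≤ 0 :=
      mul_nonpos_of_nonpos_of_nonneg h1 (le_max_of_le_left (norm_nonneg f))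
    exact le_trans h2 (norm_nonneg _)
  · -- main case ε < 1
    haveI : ProperSpace F := FiniteDimensional.proper ℂ F
    set S : Set X := (↑) '' (Metric.sphere (0 : F) 1) with hSdef
    have hScpt : IsCompact S := (isCompact_sphere (0 : F) 1).image continuous_subtype_val
    obtain ⟨t, htS, htfin, hcover⟩ :=
      Metric.finite_approx_of_totallyBounded hScpt.totallyBounded (ε / 2) (by positivity)
    have hnorm1 : ∀ y ∈ t, ‖y‖ = 1 := by
      intro y hy
      obtain ⟨z, hz, rfl⟩ := htS hy
      exact mem_sphere_zero_iff_norm.mp hz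
    have hg : ∀ y : X, ∃ gy : X →L[ℂ] ℂ, y ∈ t → ‖gy‖ = 1 ∧ gy y = ‖y‖ := by
      intro y
      by_cases hy : y ∈ t
      · have hy0 : y ≠ 0 := by
          intro h; rw [h] at hy; simpa using hnorm1 0 hy
        obtain ⟨gy, h1, h2⟩ := exists_dual_vector ℂ y (norm_ne_zero_iff.mpr hy0)
        exact ⟨gy, fun _ => ⟨h1, h2⟩⟩
      · exact ⟨0, fun h => absurd h hy⟩
    choose g hgprop using hg
    set M : Submodule ℂ X := ⨅ y ∈ t, LinearMap.ker (g y : X →ₗ[ℂ] ℂ) with hMdef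
    have hmem : ∀ x : X, x ∈ M ↔ ∀ y ∈ t, g y x = 0 := by
      intro x
      simp only [hMdef, Submodule.mem_iInf, LinearMap.mem_ker,
        ContinuousLinearMap.coe_coe]
    refine ⟨M, ?_, ?_, ?_⟩
    · -- closedness
      have : (M : Set X) = ⋂ y ∈ t, (LinearMap.ker (g y : X →ₗ[ℂ] ℂ) : Set X) := by
        ext x
        simp [hmem x, Set.mem_iInter₂]
      rw [this]
      exact isClosed_biInter fun y _ => ContinuousLinearMap.isClosed_ker (g y)
    · -- finite codimension
      haveI : Fintype ↥t := htfin.fintype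
      let L : X →ₗ[ℂ] (↥t → ℂ) := LinearMap.pi fun y : ↥t => (g y.1 : X →ₗ[ℂ] ℂ)
      have hML : M = LinearMap.ker L := by
        ext x
        simp [hmem x, L, LinearMap.pi, funext_iff, Subtype.forall]
      rw [hML]
      exact (L.quotKerEquivRange).symm.finiteDimensional
    · -- inequality
      intro f hf m hm
      have hgm : ∀ y ∈ t, g y m = 0 := (hmem m).mp hm
      by_cases hf0 : f = 0
      · subst hf0
        simp only [zero_add, norm_zero]
        have : max 0 (‖m‖ / 2) = ‖m‖ / 2 := max_eq_right (by positivity)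
        rw [ge_iff_le, this]
        nlinarith [norm_nonneg m]
      · have hfn : (0 : ℝ) < ‖f‖ := norm_pos_iff.mpr hf0
        set u : X := (‖f‖ : ℂ)⁻¹ • f with hu
        have hfC : (‖f‖ : ℂ) ≠ 0 := by
          simpa using hfn.ne'
        have hun : ‖u‖ = 1 := by
          rw [hu, norm_smul]
          simp [abs_of_pos hfn]
          field_simp
        have huS : u ∈ S := by
          refine ⟨⟨u, F.smul_mem _ hf⟩, ?_, rfl⟩
          simpa [Submodule.norm_coe] using hun
        obtain ⟨y, hyt, hyball⟩ := Set.mem_iUnion₂.mp (hcover huS)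
        have hdist : ‖u - y‖ < ε / 2 := by
          simpa [dist_eq_norm] using Metric.mem_ball.mp hyball
        obtain ⟨hgn, hgv⟩ := hgprop y hyt
        have hy1 : ‖y‖ = 1 := hnorm1 y hyt
        have hgyy : ‖g y y‖ = 1 := by rw [hgv]; simp [hy1]
        have hgyu : 1 - ε / 2 ≤ ‖g y u‖ := by
          have h1 : ‖g y y - g y u‖ ≤ ‖u - y‖ := by
            have := (g y).le_opNorm (y - u)
            rw [hgn, one_mul] at this
            calc ‖g y y - g y u‖ = ‖g y (y - u)‖ := by rw [map_sub]
              _ ≤ ‖y - u‖ := this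
              _ = ‖u - y‖ := norm_sub_rev _ _
          have h2 : ‖g y y‖ - ‖g y u‖ ≤ ‖g y y - g y u‖ := norm_sub_norm_le _ _
          rw [hgyy] at h2
          linarith
        have hfu : f = (‖f‖ : ℂ) • u := by
          rw [hu, smul_smul, mul_inv_cancel₀ hfC, one_smul]
        have hgyf : ‖g y f‖ = ‖f‖ * ‖g y u‖ := by
          conv_lhs => rw [hfu]
          rw [map_smul, norm_smul]
          simp [abs_of_pos hfn]
        have hA : (1 - ε / 2) * ‖f‖ ≤ ‖f + m‖ := by
          have h1 : ‖g y (f + m)‖ ≤ ‖f + m‖ := by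
            have := (g y).le_opNorm (f + m)
            rwa [hgn, one_mul] at this
          have h2 : g y (f + m) = g y f := by
            rw [map_add, hgm y hyt, add_zero]
          rw [h2, hgyf] at h1
          nlinarith [hgyu, hfn.le]
        have hm2 : ‖m‖ ≤ ‖f + m‖ + ‖f‖ := by
          have h := norm_add_le (f + m) (-f)
          rw [norm_neg] at h
          have he : f + m + -f = m := by abel
          rwa [he] at h
        rw [ge_iff_le]
        rcases le_total ‖f‖ (‖m‖ / 2) with hc | hc
        · rw [max_eq_right hc]
          nlinarith [norm_nonneg (f + m), norm_nonneg f]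
        · rw [max_eq_left hc]
          nlinarith [norm_nonneg f]
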